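/- Let x lie in the open unit disk of ℝ² and v = (v₁,v₂) ∈ ℝ², v ≠ 0, and write n = (n₁,n₂) := x_b(x,v). Then the map x ↦ −2A_{v,x_b(x,v)} (with v fixed) is differentiable, and the 2×2 Jacobian matrices in x of its columns are: ∇_x(−2A¹_{v,x_b(x,v)}) = [[(4v₁²v₂²n₁³ + 2v₁v₂³(3n₁²n₂−n₂³) + 2v₂⁴(3n₁n₂²+n₁³))/(v·n)³, (−4v₁³v₂n₁³ − 2v₁²v₂²(3n₁²n₂−n₂³) − 2v₁v₂³(3n₁n₂²+n₁³))/(v·n)³],[(4v₂⁴n₂³ + 2v₁v₂³(3n₁n₂²−n₁³) + 2v₁²v₂²(3n₁²n₂+n₂³))/(v·n)³, (−4v₁v₂³n₂³ − 2v₁²v₂²(3n₁n₂²−n₁³) − 2v₁³v₂(3n₁²n₂+n₂³))/(v·n)³]] and ∇_x(−2A²_{v,x_b(x,v)}) = [[(−4v₁³v₂n₁³ − 2v₁v₂³(3n₁n₂²+n₁³) − 2v₁²v₂²(3n₁²n₂−n₂³))/(v·n)³, (4v₁⁴n₁³ + 2v₁²v₂²(3n₁n₂²+n₁³) + 2v₁³v₂(3n₁²n₂−n₂³))/(v·n)³],[(−4v₁v₂³n₂³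 − 2v₁³v₂(3n₁²n₂+n₂³) − 2v₁²v₂²(3n₁n₂²−n₁³))/(v·n)³, (4v₁²v₂²n₂³ + 2v₁⁴(3n₁²n₂+n₂³) + 2v₁³v₂(3n₁n₂²−n₁³))/(v·n)³]]. -/

import Mathlib

noncomputable section

open Matrix Real Set

/-- The Euclidean plane ℝ². -/
abbrev E : Type := EuclideanSpace ℝ (Fin 2)

/-- Dot product on ℝ². -/
def dot (a b : E) : ℝ := a 0 * b 0 + a 1 * b 1

/-- Build a vector of ℝ² from its components. -/
def toE (f : Fin 2 → ℝ) : E := (WithLp.equiv 2 (Fin 2 → ℝ)).symm f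

/-- Tensor (outer) product a⊗b, (a⊗b)_{ij} = aᵢ bⱼ. -/
def outer (a b : E) : Matrix (Fin 2) (Fin 2) ℝ := Matrix.of fun i j => a i * b j

/-- Matrix acting on a column vector. -/
def mulV (M : Matrix (Fin 2) (Fin 2) ℝ) (v : E) : E := toE fun i => M i 0 * v 0 + M i 1 * v 1

/-- Row vector multiplied by a matrix on the right. -/
def vMulM (w : E) (M : Matrix (Fin 2) (Fin 2) ℝ) : E := toE fun j => w 0 * M 0 j + w 1 * M 1 j

/-- Specular reflection matrix R_n = I - 2 n⊗n. -/
def Rmat (n : E) : Matrix (Fin 2) (Fin 2) ℝ := 1 - (2 : ℝ) • outer n n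

/-- The matrix A_{v,n} = ((v·n) I + n⊗v)(I - (v⊗n)/(v·n)). -/
def Amat (v n : E) : Matrix (Fin 2) (Fin 2) ℝ :=
  (dot v n • (1 : Matrix (Fin 2) (Fin 2) ℝ) + outer n v) *
    (1 - (dot v n)⁻¹ • outer v n)

/-- Counterclockwise rotation by π/2. -/
def Qmat : Matrix (Fin 2) (Fin 2) ℝ := !![0, -1; 1, 0]

/-- Backward exit time from the closed unit disk. -/
def tb (x v : E) : ℝ := sSup {s : ℝ | 0 ≤ s ∧ ‖x - s • v‖ ≤ 1}

/-- Backward exit point from the closed unit disk. -/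
def xb (x v : E) : E := x - tb x v • v

/-- The i-th column of a 2×2 matrix, as a vector of ℝ². -/
def colE (M : Matrix (Fin 2) (Fin 2) ℝ) (i : Fin 2) : E := toE fun k => M k i

/-- A 2×2 matrix as a continuous linear map ℝ² → ℝ². -/
def toCLM (M : Matrix (Fin 2) (Fin 2) ℝ) : E →L[ℝ] E :=
  LinearMap.toContinuousLinearMap (Matrix.toEuclideanLin M)

namespace S10

lemma norm_sq_E (y : E) : ‖y‖ ^ 2 = y 0 ^ 2 + y 1 ^ 2 := by
  rw [EuclideanSpace.norm_eq, Real.sq_sqrt (by positivity)]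
  simp [Fin.sum_univ_two, sq_abs]

lemma norm_le_one_iff (y : E) : ‖y‖ ≤ 1 ↔ y 0 ^ 2 + y 1 ^ 2 ≤ 1 := by
  rw [← norm_sq_E]
  constructor <;> intro h <;> nlinarith [norm_nonneg y]

def Bf (v y : E) : ℝ := y 0 * v 0 + y 1 * v 1
def af (v : E) : ℝ := v 0 ^ 2 + v 1 ^ 2
def discf (v y : E) : ℝ := Bf v y ^ 2 - af v * (y 0 ^ 2 + y 1 ^ 2 - 1)
def Tf (v y : E) : ℝ := (Bf v y + Real.sqrt (discf v y)) / af v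

lemma af_pos {v : E} (hv : v ≠ 0) : 0 < af v := by
  rcases lt_or_eq_of_le (by unfold af; positivity : (0:ℝ) ≤ af v) with h | h
  · exact h
  · exfalso; apply hv
    have h' : v 0 ^ 2 + v 1 ^ 2 = 0 := by unfold af at h; linarith
    have h0 : v 0 = 0 := by nlinarith [sq_nonneg (v 0), sq_nonneg (v 1)]
    have h1 : v 1 = 0 := by nlinarith [sq_nonneg (v 0), sq_nonneg (v 1)]
    ext i
    fin_cases i <;> simp [h0, h1]

lemma sq_lt_one {y : E} (hy : ‖y‖ < 1) : y 0 ^ 2 + y 1 ^ 2 < 1 := by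
  have := norm_sq_E y; nlinarith [norm_nonneg y]

lemma discf_pos {v y : E} (hv : v ≠ 0) (hy : ‖y‖ < 1) : 0 < discf v y := by
  have h1 := sq_lt_one hy
  have := af_pos hv
  unfold discf
  nlinarith [sq_nonneg (Bf v y)]

lemma le_add_sqrt (A B s r : ℝ) (hs0 : 0 ≤ s) (h2 : (A*r - B)^2 ≤ s^2) :
    A * r ≤ B + s := by
  nlinarith [sq_nonneg (A*r - B - s), sq_nonneg (A*r - B + s)]

lemma circle_key (T A B Q s : ℝ) (hA : A ≠ 0) (ht : A * T = B + s)
    (hs2 : s ^ 2 = B ^ 2 - A * (Q - 1)) : Q - 2 * T * B + T ^ 2 * A = 1 := by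
  apply mul_left_cancel₀ hA
  linear_combination (A * T - B + s) * ht + hs2

lemma tb_eq {v y : E} (hv : v ≠ 0) (hy : ‖y‖ < 1) : tb y v = Tf v y := by
  have ha := af_pos hv
  have hA : (0:ℝ) < v 0 ^ 2 + v 1 ^ 2 := by unfold af at ha; linarith
  have hd := discf_pos hv hy
  have hq1 := sq_lt_one hy
  have hs0 : 0 ≤ Real.sqrt (discf v y) := Real.sqrt_nonneg _
  have hs2' : Real.sqrt (discf v y) ^ 2 = discf v y := Real.sq_sqrt hd.le
  set s := Real.sqrt (discf v y) with hsdef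
  have hs2 : s ^ 2 = (y 0 * v 0 + y 1 * v 1) ^ 2
      - (v 0 ^ 2 + v 1 ^ 2) * (y 0 ^ 2 + y 1 ^ 2 - 1) := by
    rw [hs2']; unfold discf Bf af; ring
  have hBs : -(y 0 * v 0 + y 1 * v 1) ≤ s := by
    have habs : |Bf v y| ≤ s := by
      rw [← Real.sqrt_sq_eq_abs, hsdef]
      apply Real.sqrt_le_sqrt
      unfold discf; nlinarith [af_pos hv]
    unfold Bf at habs
    linarith [neg_abs_le (y 0 * v 0 + y 1 * v 1)]
  have ht : (v 0 ^ 2 + v 1 ^ 2) * Tf v y = (y 0 * v 0 + y 1 * v 1) + s := by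
    unfold Tf af Bf
    rw [mul_div_cancel₀ _ (ne_of_gt hA)]
  refine IsGreatest.csSup_eq ⟨⟨?_, ?_⟩, ?_⟩
  · unfold Tf
    apply div_nonneg _ ha.le
    rw [← hsdef]
    unfold Bf
    linarith
  · rw [norm_le_one_iff]
    have e0 : (y - Tf v y • v) 0 = y 0 - Tf v y * v 0 := by simp
    have e1 : (y - Tf v y • v) 1 = y 1 - Tf v y * v 1 := by simp
    rw [e0, e1]
    have key := circle_key (Tf v y) (v 0 ^ 2 + v 1 ^ 2) (y 0 * v 0 + y 1 * v 1)
      (y 0 ^ 2 + y 1 ^ 2) s (ne_of_gt hA) ht hs2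
    nlinarith [key]
  · rintro r ⟨hr0, hr1⟩
    rw [norm_le_one_iff] at hr1
    have e0 : (y - r • v) 0 = y 0 - r * v 0 := by simp
    have e1 : (y - r • v) 1 = y 1 - r * v 1 := by simp
    rw [e0, e1] at hr1
    have hquad : (v 0 ^ 2 + v 1 ^ 2) * r ^ 2 - 2 * (y 0 * v 0 + y 1 * v 1) * r
        + (y 0 ^ 2 + y 1 ^ 2 - 1) ≤ 0 := by nlinarith
    have h2 : ((v 0 ^ 2 + v 1 ^ 2) * r - (y 0 * v 0 + y 1 * v 1)) ^ 2 ≤ s ^ 2 := by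
      nlinarith [mul_nonpos_of_nonneg_of_nonpos hA.le hquad]
    have hrA := le_add_sqrt (v 0 ^ 2 + v 1 ^ 2) (y 0 * v 0 + y 1 * v 1) s r hs0 h2
    rw [← ht] at hrA
    exact le_of_mul_le_mul_left hrA hA

lemma xb_apply (y v : E) (k : Fin 2) : xb y v k = y k - tb y v * v k := by
  simp [xb]

lemma dot_xb_eq {x v : E} (hv : v ≠ 0) (hx : ‖x‖ < 1) :
    dot v (xb x v) = -Real.sqrt (discf v x) := by
  have ha := af_pos hv
  set s := Real.sqrt (discf v x) with hsdef
  have hseq : af v * Tf v x = Bf v x + s := by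
    unfold Tf; rw [mul_div_cancel₀ _ (ne_of_gt ha)]
  rw [dot, xb_apply, xb_apply, tb_eq hv hx]
  unfold af Bf at hseq
  nlinarith [hseq]

lemma dot_xb_neg {x v : E} (hv : v ≠ 0) (hx : ‖x‖ < 1) : dot v (xb x v) < 0 := by
  rw [dot_xb_eq hv hx]
  have := Real.sqrt_pos.mpr (discf_pos hv hx)
  linarith

def Ltd (x v : E) : E →L[ℝ] ℝ :=
  (dot v (xb x v))⁻¹ • ((xb x v 0) • EuclideanSpace.proj (𝕜 := ℝ) (0 : Fin 2)
    + (xb x v 1) • EuclideanSpace.proj (𝕜 := ℝ) (1 : Fin 2))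

lemma Ltd_apply (x v : E) (w : E) :
    Ltd x v w = (dot v (xb x v))⁻¹ * (xb x v 0 * w 0 + xb x v 1 * w 1) := by
  simp [Ltd, mul_add]

lemma hasFDerivAt_Tf {x v : E} (hv : v ≠ 0) (hx : ‖x‖ < 1) :
    HasFDerivAt (fun y => Tf v y)
      ((dot v (xb x v))⁻¹ • ((xb x v 0) • EuclideanSpace.proj (𝕜 := ℝ) (0 : Fin 2)
        + (xb x v 1) • EuclideanSpace.proj (𝕜 := ℝ) (1 : Fin 2))) x := by
  have ha := af_pos hv
  have hA : (0:ℝ) < v 0 ^ 2 + v 1 ^ 2 := by unfold af at ha; linarith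
  have hdisc := discf_pos hv hx
  have hs0 : 0 < Real.sqrt (discf v x) := Real.sqrt_pos.2 hdisc
  have h0 : HasFDerivAt (fun y : E => y 0) (EuclideanSpace.proj (𝕜 := ℝ) (0 : Fin 2)) x :=
    (EuclideanSpace.proj (𝕜 := ℝ) (0 : Fin 2)).hasFDerivAt
  have h1 : HasFDerivAt (fun y : E => y 1) (EuclideanSpace.proj (𝕜 := ℝ) (1 : Fin 2)) x :=
    (EuclideanSpace.proj (𝕜 := ℝ) (1 : Fin 2)).hasFDerivAt
  have hB := (h0.mul_const (v 0)).add (h1.mul_const (v 1))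
  have hQ := (h0.mul h0).add (h1.mul h1)
  have hg := (hB.mul hB).sub ((hQ.sub_const 1).const_mul (af v))
  have hgx : (x 0 * v 0 + x 1 * v 1) * (x 0 * v 0 + x 1 * v 1)
      - af v * (x 0 * x 0 + x 1 * x 1 - 1) ≠ 0 := by
    have hh : discf v x = (x 0 * v 0 + x 1 * v 1) * (x 0 * v 0 + x 1 * v 1)
        - af v * (x 0 * x 0 + x 1 * x 1 - 1) := by unfold discf Bf; ring
    rw [← hh]
    exact ne_of_gt hdisc
  have hsq := hg.sqrt hgx
  have hT := (hB.add hsq).mul_const (af v)⁻¹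
  have hfun : (fun y => Tf v y) = (fun y : E => ((y 0 * v 0 + y 1 * v 1)
      + Real.sqrt ((y 0 * v 0 + y 1 * v 1) * (y 0 * v 0 + y 1 * v 1)
        - af v * (y 0 * y 0 + y 1 * y 1 - 1))) * (af v)⁻¹) := by
    funext y
    rw [Tf, div_eq_mul_inv]
    have e1 : Bf v y = y 0 * v 0 + y 1 * v 1 := by unfold Bf; ring
    have e2 : discf v y = (y 0 * v 0 + y 1 * v 1) * (y 0 * v 0 + y 1 * v 1)
        - af v * (y 0 * y 0 + y 1 * y 1 - 1) := by unfold discf Bf; ring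
    rw [e1, e2]
  rw [hfun]
  refine hT.congr_fderiv ?_
  have htb : tb x v = Tf v x := tb_eq hv hx
  set s := Real.sqrt (discf v x) with hsdef
  have hdot : dot v (xb x v) = -s := dot_xb_eq hv hx
  have hsqeq : Real.sqrt ((x 0 * v 0 + x 1 * v 1) * (x 0 * v 0 + x 1 * v 1)
      - af v * (x 0 * x 0 + x 1 * x 1 - 1)) = s := by
    rw [hsdef]; congr 1; unfold discf Bf; ring
  have hTval : Tf v x = ((x 0 * v 0 + x 1 * v 1) + s) / (v 0 ^ 2 + v 1 ^ 2) := by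
    rw [Tf, hsdef]
    unfold Bf af
    ring
  have hsne : s ≠ 0 := by rw [hsdef]; positivity
  have hAne : (v 0 ^ 2 + v 1 ^ 2) ≠ 0 := ne_of_gt hA
  ext w
  rw [hdot]
  simp only [ContinuousLinearMap.smul_apply, ContinuousLinearMap.add_apply,
    ContinuousLinearMap.sub_apply, ContinuousLinearMap.coe_smul', Pi.smul_apply,
    PiLp.proj_apply, smul_eq_mul, Pi.add_apply, Pi.mul_apply, Pi.sub_apply]
  rw [hsqeq, xb_apply, xb_apply, htb, hTval]
  unfold af
  field_simp
  ring

lemma hasFDerivAt_xbk {x v : E} (hv : v ≠ 0) (hx : ‖x‖ < 1) (k : Fin 2) :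
    HasFDerivAt (fun y => xb y v k)
      (EuclideanSpace.proj (𝕜 := ℝ) k - v k • Ltd x v) x := by
  have hT := hasFDerivAt_Tf hv hx
  have hev : (fun y => xb y v k) =ᶠ[nhds x] (fun y => y k - Tf v y * v k) := by
    filter_upwards [Metric.isOpen_ball.mem_nhds (mem_ball_zero_iff.mpr hx)] with y hy
    rw [xb_apply, tb_eq hv (mem_ball_zero_iff.mp hy)]
  exact (((EuclideanSpace.proj (𝕜 := ℝ) k).hasFDerivAt).sub
    (hT.mul_const (v k))).congr_of_eventuallyEq hev

lemma toCLM_apply (M : Matrix (Fin 2) (Fin 2) ℝ) (w : E) (k : Fin 2) :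
    toCLM M w k = M k 0 * w 0 + M k 1 * w 1 := by
  simp [toCLM, Matrix.toEuclideanLin_apply, Matrix.mulVec, dotProduct, Fin.sum_univ_two]
  fin_cases k <;> rfl

lemma hasFDerivAt_pair {f g : E → ℝ} {Lf Lg : E →L[ℝ] ℝ} {x : E}
    (hf : HasFDerivAt f Lf x) (hg : HasFDerivAt g Lg x) (M : Matrix (Fin 2) (Fin 2) ℝ)
    (h0 : ∀ w : E, Lf w = M 0 0 * w 0 + M 0 1 * w 1)
    (h1 : ∀ w : E, Lg w = M 1 0 * w 0 + M 1 1 * w 1) :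
    HasFDerivAt (fun y => toE ![f y, g y]) (toCLM M) x := by
  have hΦ : HasFDerivAt (fun y => (![f y, g y] : Fin 2 → ℝ))
      (ContinuousLinearMap.pi ![Lf, Lg]) x := by
    rw [hasFDerivAt_pi]
    intro i
    fin_cases i
    · exact hf
    · exact hg
  have hcomp := ((PiLp.continuousLinearEquiv 2 ℝ (fun _ : Fin 2 => ℝ)).symm
    : (Fin 2 → ℝ) ≃L[ℝ] E).toContinuousLinearMap.hasFDerivAt.comp x hΦ
  have hfun : (fun y => toE ![f y, g y]) =
      (fun y => ((PiLp.continuousLinearEquiv 2 ℝ (fun _ : Fin 2 => ℝ)).symm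
        : (Fin 2 → ℝ) →L[ℝ] E) ![f y, g y]) := rfl
  rw [hfun]
  refine hcomp.congr_fderiv ?_
  ext w k
  rw [toCLM_apply]
  simp [ContinuousLinearMap.pi_apply]
  fin_cases k
  · simpa using (h0 w)
  · simpa using (h1 w)

end S10

set_option maxHeartbeats 2000000 in
/-- Jacobians in x of the columns of x ↦ −2A_{v,x_b(x,v)}. -/
theorem stmt10 (x v : E) (hx : ‖x‖ < 1) (hv : v ≠ 0) :
    let n := xb x v
    let d := dot v n
    HasFDerivAt (fun y => colE ((-2 : ℝ) • Amat v (xb y v)) 0)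
      (toCLM
        !![(4 * v 0 ^ 2 * v 1 ^ 2 * n 0 ^ 3
              + 2 * v 0 * v 1 ^ 3 * (3 * n 0 ^ 2 * n 1 - n 1 ^ 3)
              + 2 * v 1 ^ 4 * (3 * n 0 * n 1 ^ 2 + n 0 ^ 3)) / d ^ 3,
           (-4 * v 0 ^ 3 * v 1 * n 0 ^ 3
              - 2 * v 0 ^ 2 * v 1 ^ 2 * (3 * n 0 ^ 2 * n 1 - n 1 ^ 3)
              - 2 * v 0 * v 1 ^ 3 * (3 * n 0 * n 1 ^ 2 + n 0 ^ 3)) / d ^ 3;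
           (4 * v 1 ^ 4 * n 1 ^ 3
              + 2 * v 0 * v 1 ^ 3 * (3 * n 0 * n 1 ^ 2 - n 0 ^ 3)
              + 2 * v 0 ^ 2 * v 1 ^ 2 * (3 * n 0 ^ 2 * n 1 + n 1 ^ 3)) / d ^ 3,
           (-4 * v 0 * v 1 ^ 3 * n 1 ^ 3
              - 2 * v 0 ^ 2 * v 1 ^ 2 * (3 * n 0 * n 1 ^ 2 - n 0 ^ 3)
              - 2 * v 0 ^ 3 * v 1 * (3 * n 0 ^ 2 * n 1 + n 1 ^ 3)) / d ^ 3]) x ∧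
    HasFDerivAt (fun y => colE ((-2 : ℝ) • Amat v (xb y v)) 1)
      (toCLM
        !![(-4 * v 0 ^ 3 * v 1 * n 0 ^ 3
              - 2 * v 0 * v 1 ^ 3 * (3 * n 0 * n 1 ^ 2 + n 0 ^ 3)
              - 2 * v 0 ^ 2 * v 1 ^ 2 * (3 * n 0 ^ 2 * n 1 - n 1 ^ 3)) / d ^ 3,
           (4 * v 0 ^ 4 * n 0 ^ 3
              + 2 * v 0 ^ 2 * v 1 ^ 2 * (3 * n 0 * n 1 ^ 2 + n 0 ^ 3)
              + 2 * v 0 ^ 3 * v 1 * (3 * n 0 ^ 2 * n 1 - n 1 ^ 3)) / d ^ 3;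
           (-4 * v 0 * v 1 ^ 3 * n 1 ^ 3
              - 2 * v 0 ^ 3 * v 1 * (3 * n 0 ^ 2 * n 1 + n 1 ^ 3)
              - 2 * v 0 ^ 2 * v 1 ^ 2 * (3 * n 0 * n 1 ^ 2 - n 0 ^ 3)) / d ^ 3,
           (4 * v 0 ^ 2 * v 1 ^ 2 * n 1 ^ 3
              + 2 * v 0 ^ 4 * (3 * n 0 ^ 2 * n 1 + n 1 ^ 3)
              + 2 * v 0 ^ 3 * v 1 * (3 * n 0 * n 1 ^ 2 - n 0 ^ 3)) / d ^ 3]) x := by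
  
  intro n d
  have hn : n = xb x v := rfl
  have hd : d = dot v n := rfl
  have hdval : dot v (xb x v) = v 0 * xb x v 0 + v 1 * xb x v 1 := rfl
  have hdneg : dot v (xb x v) < 0 := S10.dot_xb_neg hv hx
  have hdd : v 0 * xb x v 0 + v 1 * xb x v 1 ≠ 0 := ne_of_lt hdneg
  have hp := S10.hasFDerivAt_xbk hv hx 0
  have hq := S10.hasFDerivAt_xbk hv hx 1
  have hD := (hp.const_mul (v 0)).add (hq.const_mul (v 1))
  have hball : Metric.ball (0:E) 1 ∈ nhds x :=
    Metric.isOpen_ball.mem_nhds (mem_ball_zero_iff.mpr hx)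
  have hInv := (hasDerivAt_inv hdd).comp_hasFDerivAt x hD
  constructor
  · -- column 0
    have hF0 := (hD.const_mul (-2 : ℝ)).add
      (((hp.mul hp).const_mul (2*(v 0^2+v 1^2))).mul hInv)
    have hF1 := ((hq.mul_const (v 0)).const_mul (-2 : ℝ)).add
      (((hp.const_mul (v 1)).const_mul (2 : ℝ)).add
        (((hq.mul hp).const_mul (2*(v 0^2+v 1^2))).mul hInv))
    refine HasFDerivAt.congr_of_eventuallyEq
      (S10.hasFDerivAt_pair hF0 hF1 _ ?_ ?_) ?_
    · intro w
      simp only [ContinuousLinearMap.add_apply, ContinuousLinearMap.smul_apply,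
        ContinuousLinearMap.sub_apply, ContinuousLinearMap.coe_smul', Pi.smul_apply,
        PiLp.proj_apply, smul_eq_mul, S10.Ltd_apply, Function.comp_apply, Matrix.of_apply,
        Matrix.cons_val', Matrix.cons_val_zero,
        Matrix.cons_val_one, Matrix.head_cons, Matrix.empty_val', Matrix.cons_val_fin_one,
        Matrix.head_fin_const, Pi.add_apply, Pi.mul_apply]
      simp only [hn, hd, hdval]
      field_simp
      ring
    · intro w
      simp only [ContinuousLinearMap.add_apply, ContinuousLinearMap.smul_apply,
        ContinuousLinearMap.sub_apply, ContinuousLinearMap.coe_smul', Pi.smul_apply,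
        PiLp.proj_apply, smul_eq_mul, S10.Ltd_apply, Function.comp_apply, Matrix.of_apply,
        Matrix.cons_val', Matrix.cons_val_zero,
        Matrix.cons_val_one, Matrix.head_cons, Matrix.empty_val', Matrix.cons_val_fin_one,
        Matrix.head_fin_const, Pi.add_apply, Pi.mul_apply]
      simp only [hn, hd, hdval]
      field_simp
      ring
    · filter_upwards [hball] with y hy
      have hyn : ‖y‖ < 1 := mem_ball_zero_iff.mp hy
      have hDy : v 0 * xb y v 0 + v 1 * xb y v 1 ≠ 0 := ne_of_lt (S10.dot_xb_neg hv hyn)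
      have hDy2 : v 0 * xb y v 0 + xb y v 1 * v 1 ≠ 0 := by rw [mul_comm (xb y v 1)]; exact hDy
      have hDy3 : xb y v 1 * v 1 + v 0 * xb y v 0 ≠ 0 := by rw [add_comm]; exact hDy2
      unfold colE toE
      congr 1
      funext k
      fin_cases k <;>
      · simp only [Amat, dot, outer, Matrix.mul_apply, Matrix.add_apply, Matrix.sub_apply,
          Matrix.smul_apply, Matrix.one_apply, Matrix.of_apply, smul_eq_mul,
          Fin.sum_univ_two, Matrix.cons_val_zero, Matrix.cons_val_one, Matrix.head_cons]
        norm_num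
        field_simp
        ring
  · -- column 1
    have hF0 := ((hp.mul_const (v 1)).const_mul (-2 : ℝ)).add
      (((hq.const_mul (v 0)).const_mul (2 : ℝ)).add
        (((hp.mul hq).const_mul (2*(v 0^2+v 1^2))).mul hInv))
    have hF1 := (hD.const_mul (-2 : ℝ)).add
      (((hq.mul hq).const_mul (2*(v 0^2+v 1^2))).mul hInv)
    refine HasFDerivAt.congr_of_eventuallyEq
      (S10.hasFDerivAt_pair hF0 hF1 _ ?_ ?_) ?_
    · intro w
      simp only [ContinuousLinearMap.add_apply, ContinuousLinearMap.smul_apply,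
        ContinuousLinearMap.sub_apply, ContinuousLinearMap.coe_smul', Pi.smul_apply,
        PiLp.proj_apply, smul_eq_mul, S10.Ltd_apply, Function.comp_apply, Matrix.of_apply,
        Matrix.cons_val', Matrix.cons_val_zero,
        Matrix.cons_val_one, Matrix.head_cons, Matrix.empty_val', Matrix.cons_val_fin_one,
        Matrix.head_fin_const, Pi.add_apply, Pi.mul_apply]
      simp only [hn, hd, hdval]
      field_simp
      ring
    · intro w
      simp only [ContinuousLinearMap.add_apply, ContinuousLinearMap.smul_apply,
        ContinuousLinearMap.sub_apply, ContinuousLinearMap.coe_smul', Pi.smul_apply,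
        PiLp.proj_apply, smul_eq_mul, S10.Ltd_apply, Function.comp_apply, Matrix.of_apply,
        Matrix.cons_val', Matrix.cons_val_zero,
        Matrix.cons_val_one, Matrix.head_cons, Matrix.empty_val', Matrix.cons_val_fin_one,
        Matrix.head_fin_const, Pi.add_apply, Pi.mul_apply]
      simp only [hn, hd, hdval]
      field_simp
      ring
    · filter_upwards [hball] with y hy
      have hyn : ‖y‖ < 1 := mem_ball_zero_iff.mp hy
      have hDy : v 0 * xb y v 0 + v 1 * xb y v 1 ≠ 0 := ne_of_lt (S10.dot_xb_neg hv hyn)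
      have hDy2 : v 0 * xb y v 0 + xb y v 1 * v 1 ≠ 0 := by rw [mul_comm (xb y v 1)]; exact hDy
      have hDy3 : xb y v 1 * v 1 + v 0 * xb y v 0 ≠ 0 := by rw [add_comm]; exact hDy2
      unfold colE toE
      congr 1
      funext k
      fin_cases k <;>
      · simp only [Amat, dot, outer, Matrix.mul_apply, Matrix.add_apply, Matrix.sub_apply,
          Matrix.smul_apply, Matrix.one_apply, Matrix.of_apply, smul_eq_mul,
          Fin.sum_univ_two, Matrix.cons_val_zero, Matrix.cons_val_one, Matrix.head_cons]
        norm_num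
        field_simp
        ring
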